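/- Let \mu_1, \mu_2 be real numbers with -1/2 < \mu_1 < \mu_2. Then for every real x, \exp_{\mu_2}(x) = (1/\beta(\mu_1+1/2, \mu_2-\mu_1)) \int_{-1}^{1} \exp_{\mu_1}(xt) |t|^{2\mu_1} (1-t)^{\mu_2-\mu_1-1} (1+t)^{\mu_2-\mu_1} \, dt. -/

import Mathlib

open Finset

/-- The Dunkl generalized factorial: `γ_μ(2p+ε) = 2^(2p+ε) p! (μ+1/2)_{p+ε}`
for `ε ∈ {0,1}`. -/
noncomputable def dunklGamma (μ : ℝ) (n : ℕ) : ℝ :=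
  2 ^ n * (Nat.factorial (n / 2) : ℝ) *
    ∏ i ∈ Finset.range (n / 2 + n % 2), (μ + 1 / 2 + i)

/-- Euler's Beta function `β(x,y) = Γ(x)Γ(y)/Γ(x+y)`. -/
noncomputable def realBeta (x y : ℝ) : ℝ :=
  Real.Gamma x * Real.Gamma y / Real.Gamma (x + y)

/-- The generalized (Dunkl) exponential function `exp_μ(x) = ∑ xⁿ/γ_μ(n)`. -/
noncomputable def dunklExp (μ : ℝ) (x : ℝ) : ℝ := ∑' n : ℕ, x ^ n / dunklGamma μ n

open MeasureTheory Set intervalIntegral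

section aux

lemma dunklGamma_pos {μ : ℝ} (hμ : -(1/2) < μ) (n : ℕ) : 0 < dunklGamma μ n := by
  have h : (0:ℝ) < μ + 1/2 := by linarith
  refine mul_pos (mul_pos (by positivity) (by positivity)) (Finset.prod_pos ?_)
  intro i _
  positivity

lemma summable_dunkl {μ : ℝ} (hμ : -(1/2) < μ) (y : ℝ) :
    Summable (fun n => |y| ^ n / dunklGamma μ n) := by
  have h : (0:ℝ) < μ + 1/2 := by linarith
  set m : ℝ := min (μ + 1/2) 1 with hm
  have hm0 : 0 < m := lt_min h one_pos
  have hm1 : m ≤ 1 := min_le_right _ _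
  set z : ℝ := |y| / (2 * m) with hz
  have hz0 : 0 ≤ z := div_nonneg (abs_nonneg _) (by positivity)
  have key : ∀ n, |y| ^ n / dunklGamma μ n ≤ z ^ n / (Nat.factorial (n/2)) := by
    intro n
    have hprod : (m : ℝ) ^ n ≤ ∏ i ∈ Finset.range (n / 2 + n % 2), (μ + 1 / 2 + i) := by
      calc (m:ℝ) ^ n ≤ m ^ (n / 2 + n % 2) := by
            apply pow_le_pow_of_le_one hm0.le hm1
            omega
        _ = ∏ i ∈ Finset.range (n / 2 + n % 2), m := by
            rw [Finset.prod_const, Finset.card_range]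
        _ ≤ ∏ i ∈ Finset.range (n / 2 + n % 2), (μ + 1 / 2 + i) := by
            apply Finset.prod_le_prod (fun i _ => hm0.le)
            intro i _
            have : (m:ℝ) ≤ μ + 1/2 := min_le_left _ _
            have : (0:ℝ) ≤ i := Nat.cast_nonneg i
            linarith [min_le_left (μ+1/2) (1:ℝ)]
    have hg : 2 ^ n * (Nat.factorial (n / 2) : ℝ) * m ^ n ≤ dunklGamma μ n := by
      unfold dunklGamma
      apply mul_le_mul_of_nonneg_left hprod (by positivity)
    have hgpos := dunklGamma_pos hμ n
    rw [div_le_div_iff₀ hgpos (by positivity)]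
    calc |y| ^ n * (Nat.factorial (n/2) : ℝ)
        = (z ^ n * (2 ^ n * (Nat.factorial (n / 2) : ℝ) * m ^ n)) := by
          rw [hz, div_pow, mul_pow]
          have h2 : ((2:ℝ) ^ n * m ^ n) ≠ 0 := by positivity
          field_simp
      _ ≤ z ^ n * dunklGamma μ n := by
          exact mul_le_mul_of_nonneg_left hg (pow_nonneg hz0 n)
  apply Summable.of_nonneg_of_le
    (fun n => div_nonneg (pow_nonneg (abs_nonneg y) n) (dunklGamma_pos hμ n).le) key
  have he : Summable (fun p : ℕ => z ^ (2*p) / (Nat.factorial ((2*p)/2))) := by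
    have := Real.summable_pow_div_factorial (z^2)
    apply this.congr
    intro p
    simp [pow_mul, Nat.mul_div_cancel_left]
  have ho : Summable (fun p : ℕ => z ^ (2*p+1) / (Nat.factorial ((2*p+1)/2))) := by
    have := (Real.summable_pow_div_factorial (z^2)).mul_left z
    apply this.congr
    intro p
    have : (2*p+1)/2 = p := by omega
    rw [this]
    have e : z ^ (2*p+1) = (z^2)^p * z := by rw [pow_succ, pow_mul]
    rw [e]; ring
  exact Summable.even_add_odd he ho

lemma betaFun_eqOn {u v : ℝ} : ∀ t ∈ Ioc (0:ℝ) 1,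
    ((t:ℂ) ^ ((u:ℂ) - 1) * (1 - (t:ℂ)) ^ ((v:ℂ) - 1)).re
      = t ^ (u - 1) * (1 - t) ^ (v - 1) := by
  intro t ht
  have h1 : ((t:ℂ)) ^ ((u:ℂ) - 1) = ((t ^ (u-1) : ℝ) : ℂ) := by
    rw [Complex.ofReal_cpow ht.1.le]
    push_cast; ring_nf
  have h2 : ((1 - (t:ℂ))) ^ ((v:ℂ) - 1) = (((1-t) ^ (v-1) : ℝ) : ℂ) := by
    rw [show (1 - (t:ℂ)) = (((1:ℝ) - t : ℝ) : ℂ) by push_cast; ring,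
      Complex.ofReal_cpow (by linarith [ht.2])]
    push_cast; ring_nf
  rw [h1, h2, ← Complex.ofReal_mul, Complex.ofReal_re]

lemma betaIntegrable {u v : ℝ} (hu : 0 < u) (hv : 0 < v) :
    IntervalIntegrable (fun t : ℝ => t ^ (u - 1) * (1 - t) ^ (v - 1)) volume 0 1 := by
  have hc := Complex.betaIntegral_convergent (u := u) (v := v) (by simpa) (by simpa)
  rw [intervalIntegrable_iff_integrableOn_Ioc_of_le (by norm_num)] at hc ⊢
  have h2 : IntegrableOn (fun t : ℝ =>
      ((t:ℂ) ^ ((u:ℂ) - 1) * (1 - (t:ℂ)) ^ ((v:ℂ) - 1)).re) (Ioc 0 1) volume := hc.re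
  exact h2.congr_fun betaFun_eqOn measurableSet_Ioc

lemma realBeta_pos {u v : ℝ} (hu : 0 < u) (hv : 0 < v) : 0 < realBeta u v := by
  unfold realBeta
  have := Real.Gamma_pos_of_pos hu
  have := Real.Gamma_pos_of_pos hv
  have := Real.Gamma_pos_of_pos (by linarith : 0 < u + v)
  positivity

lemma integral_betaFun {u v : ℝ} (hu : 0 < u) (hv : 0 < v) :
    ∫ t in Ioo (0:ℝ) 1, t ^ (u - 1) * (1 - t) ^ (v - 1) = realBeta u v := by
  have key := Complex.Gamma_mul_Gamma_eq_betaIntegral (s := u) (t := v) (by simpa) (by simpa)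
  have hI : Complex.betaIntegral u v
      = ((∫ t in (0:ℝ)..1, t ^ (u - 1) * (1 - t) ^ (v - 1) : ℝ) : ℂ) := by
    rw [← intervalIntegral.integral_ofReal]
    unfold Complex.betaIntegral
    rw [intervalIntegral.integral_of_le (by norm_num), intervalIntegral.integral_of_le (by norm_num)]
    apply setIntegral_congr_fun measurableSet_Ioc
    intro t ht
    have h1 : ((t:ℂ)) ^ ((u:ℂ) - 1) = ((t ^ (u-1) : ℝ) : ℂ) := by
      rw [Complex.ofReal_cpow ht.1.le]; push_cast; ring_nf
    have h2 : ((1 - (t:ℂ))) ^ ((v:ℂ) - 1) = (((1-t) ^ (v-1) : ℝ) : ℂ) := by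
      rw [show (1 - (t:ℂ)) = (((1:ℝ) - t : ℝ) : ℂ) by push_cast; ring,
        Complex.ofReal_cpow (by linarith [ht.2])]
      push_cast; ring_nf
    simp only []
    rw [h1, h2, ← Complex.ofReal_mul]
  rw [hI, Complex.Gamma_ofReal, Complex.Gamma_ofReal,
    show ((u:ℂ) + v) = ((u+v : ℝ) : ℂ) by push_cast; ring,
    Complex.Gamma_ofReal, ← Complex.ofReal_mul, ← Complex.ofReal_mul] at key
  have key' : Real.Gamma u * Real.Gamma v
      = Real.Gamma (u+v) * ∫ t in (0:ℝ)..1, t ^ (u - 1) * (1 - t) ^ (v - 1) := by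
    exact_mod_cast key
  have hG : Real.Gamma (u+v) ≠ 0 := (Real.Gamma_pos_of_pos (by linarith)).ne'
  rw [← integral_Ioc_eq_integral_Ioo, ← intervalIntegral.integral_of_le (by norm_num : (0:ℝ) ≤ 1)]
  unfold realBeta
  field_simp
  linarith [key']

lemma Gamma_add_nat {a : ℝ} (ha : 0 < a) (k : ℕ) :
    Real.Gamma (a + k) = Real.Gamma a * ∏ i ∈ Finset.range k, (a + i) := by
  induction k with
  | zero => simp
  | succ k ih =>
    have h : a + (k+1 : ℕ) = (a + k) + 1 := by push_cast; ring
    rw [h, Real.Gamma_add_one (by positivity), Finset.prod_range_succ, ih]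
    ring

lemma realBeta_shift {a b : ℝ} (ha : 0 < a) (hb : 0 < b) (k : ℕ) :
    realBeta (a + k) b * ∏ i ∈ Finset.range k, (a + b + i)
      = realBeta a b * ∏ i ∈ Finset.range k, (a + i) := by
  have h1 : Real.Gamma (a + k) = Real.Gamma a * ∏ i ∈ Finset.range k, (a + i) :=
    Gamma_add_nat ha k
  have h2 : Real.Gamma (a + k + b) = Real.Gamma (a + b) * ∏ i ∈ Finset.range k, (a + b + i) := by
    rw [show a + k + b = (a + b) + k by ring]
    exact Gamma_add_nat (by linarith) k
  have hG1 : Real.Gamma (a + b) ≠ 0 := (Real.Gamma_pos_of_pos (by linarith)).ne'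
  have hG2 : Real.Gamma (a + k + b) ≠ 0 := (Real.Gamma_pos_of_pos (by positivity)).ne'
  unfold realBeta
  rw [h2, h1]
  field_simp

lemma sq_image_Ioo : (fun t : ℝ => t ^ 2) '' Ioo 0 1 = Ioo (0:ℝ) 1 := by
  ext u
  constructor
  · rintro ⟨t, ⟨ht0, ht1⟩, rfl⟩
    refine ⟨by positivity, ?_⟩
    calc t^2 < 1^2 := by nlinarith
      _ = 1 := one_pow 2
  · rintro ⟨hu0, hu1⟩
    refine ⟨Real.sqrt u, ⟨Real.sqrt_pos.2 hu0, ?_⟩, Real.sq_sqrt hu0.le⟩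
    rw [show (1:ℝ) = Real.sqrt 1 by simp]
    exact Real.sqrt_lt_sqrt hu0.le hu1

lemma half_moment {e b : ℝ} (he : -1 < e) (hb : 0 < b) :
    ∫ t in Ioo (0:ℝ) 1, t ^ e * (1 - t^2) ^ (b - 1) = (1/2) * realBeta ((e+1)/2) b := by
  have hderiv : ∀ t ∈ Ioo (0:ℝ) 1, HasDerivWithinAt (fun t : ℝ => t ^ 2) (2*t) (Ioo 0 1) t := by
    intro t _
    simpa [mul_comm] using (hasDerivAt_pow 2 t).hasDerivWithinAt
  have hinj : InjOn (fun t : ℝ => t ^ 2) (Ioo 0 1) := by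
    intro s hs t ht h
    simp only [] at h
    nlinarith [hs.1, ht.1, sq_nonneg (s - t), sq_nonneg (s + t)]
  have key := integral_image_eq_integral_abs_deriv_smul measurableSet_Ioo hderiv hinj
      (fun u => u ^ ((e+1)/2 - 1) * (1 - u) ^ (b - 1))
  rw [sq_image_Ioo, integral_betaFun (by linarith) hb] at key
  have key2 : ∫ t in Ioo (0:ℝ) 1,
      |2*t| • ((t^2) ^ ((e+1)/2 - 1) * (1 - t^2) ^ (b - 1))
        = ∫ t in Ioo (0:ℝ) 1, 2 * (t ^ e * (1 - t^2) ^ (b - 1)) := by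
    apply setIntegral_congr_fun measurableSet_Ioo
    intro t ht
    have ht0 : 0 < t := ht.1
    have h1 : (t^2 : ℝ) ^ ((e+1)/2 - 1) = t ^ (e - 1) := by
      rw [← Real.rpow_natCast t 2, ← Real.rpow_mul ht0.le]
      norm_num
      congr 1
      ring
    simp only [smul_eq_mul]
    rw [h1, abs_of_pos (by linarith)]
    have h2 : t * t ^ (e - 1) = t ^ e := by
      nth_rewrite 1 [← Real.rpow_one t]
      rw [← Real.rpow_add ht0]
      congr 1
      ring
    calc 2 * t * (t ^ (e-1) * (1-t^2)^(b-1)) = 2 * ((t * t^(e-1)) * (1-t^2)^(b-1)) := by ring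
      _ = 2 * (t ^ e * (1-t^2)^(b-1)) := by rw [h2]
  rw [key2, MeasureTheory.integral_const_mul] at key
  linarith [key]

lemma contOn_rpow {g : ℝ → ℝ} (hg : Continuous g) {s : Set ℝ} (e : ℝ)
    (h : ∀ t ∈ s, g t ≠ 0) : ContinuousOn (fun t => g t ^ e) s := by
  intro t ht
  exact ((Real.continuousAt_rpow_const (g t) e (Or.inl (h t ht))).comp
    hg.continuousAt).continuousWithinAt

lemma integrableOn_Ioo_of_bound {f : ℝ → ℝ} (hf : ContinuousOn f (Ioo 0 1)) {u v C : ℝ}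
    (hu : 0 < u) (hv : 0 < v)
    (hb : ∀ t ∈ Ioo (0:ℝ) 1, ‖f t‖ ≤ C * (t ^ (u-1) * (1-t) ^ (v-1))) :
    IntegrableOn f (Ioo 0 1) volume := by
  have hbeta : IntegrableOn (fun t : ℝ => C * (t ^ (u-1) * (1-t) ^ (v-1))) (Ioo 0 1) volume := by
    have h1 := (betaIntegrable hu hv).const_mul C
    rw [intervalIntegrable_iff_integrableOn_Ioc_of_le (by norm_num)] at h1
    exact h1.mono_set Ioo_subset_Ioc_self
  exact Integrable.mono' hbeta (hf.aestronglyMeasurable measurableSet_Ioo)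
    ((ae_restrict_iff' measurableSet_Ioo).2 (ae_of_all _ hb))

end aux

section main

variable {μ1 μ2 : ℝ}

/-- The weight function. -/
noncomputable def dw (μ1 μ2 : ℝ) (t : ℝ) : ℝ :=
  |t| ^ (2*μ1) * (1-t) ^ (μ2-μ1-1) * (1+t) ^ (μ2-μ1)

lemma dw_nonneg (μ1 μ2 : ℝ) {t : ℝ} (ht : t ∈ Ioc (-1:ℝ) 1) : 0 ≤ dw μ1 μ2 t := by
  have h1 : (0:ℝ) ≤ 1 - t := by linarith [ht.2]
  have h2 : (0:ℝ) < 1 + t := by linarith [ht.1]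
  unfold dw
  positivity

lemma integrableOn_right (h1 : -(1/2) < μ1) (h2 : μ1 < μ2) (n : ℕ) :
    IntegrableOn (fun t => t^n * dw μ1 μ2 t) (Ioo 0 1) volume := by
  have hμ : (0:ℝ) < 2*μ1 + 1 := by linarith
  have hc : (0:ℝ) < μ2 - μ1 := by linarith
  apply integrableOn_Ioo_of_bound (C := 2 ^ (μ2-μ1)) ?_ hμ hc
  · intro t ht
    obtain ⟨ht0, ht1⟩ := ht
    have hw : dw μ1 μ2 t = t ^ (2*μ1) * (1-t) ^ (μ2-μ1-1) * (1+t) ^ (μ2-μ1) := by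
      unfold dw; rw [abs_of_pos ht0]
    have h1t : (0:ℝ) < 1 - t := by linarith
    have h2t : (0:ℝ) < 1 + t := by linarith
    rw [Real.norm_eq_abs, hw, abs_of_nonneg (by positivity)]
    have e1 : t ^ n ≤ 1 := pow_le_one₀ ht0.le ht1.le
    have e2 : (1+t) ^ (μ2-μ1) ≤ 2 ^ (μ2-μ1) :=
      Real.rpow_le_rpow (by linarith) (by linarith) hc.le
    have ee : (2*μ1+1-1) = 2*μ1 := by ring
    rw [ee]
    calc t^n * (t ^ (2*μ1) * (1-t) ^ (μ2-μ1-1) * (1+t) ^ (μ2-μ1))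
        ≤ 1 * (t ^ (2*μ1) * (1-t) ^ (μ2-μ1-1) * (2 ^ (μ2-μ1))) := by
          apply mul_le_mul e1 _ (by positivity) (by norm_num)
          apply mul_le_mul_of_nonneg_left e2 (by positivity)
      _ = 2 ^ (μ2-μ1) * (t ^ (2*μ1) * (1-t) ^ (μ2-μ1-1)) := by ring
  · have cA : ContinuousOn (fun t : ℝ => |t| ^ (2*μ1)) (Ioo 0 1) :=
      contOn_rpow continuous_abs _ (fun t ht => by
        simp only [abs_ne_zero]; exact ht.1.ne')
    have cB : ContinuousOn (fun t : ℝ => (1-t) ^ (μ2-μ1-1)) (Ioo 0 1) :=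
      contOn_rpow (continuous_const.sub continuous_id) _ (fun t ht => by
        show (1:ℝ) - t ≠ 0; intro hh; have h2 := ht.2; have := sub_eq_zero.1 hh; linarith)
    have cC : ContinuousOn (fun t : ℝ => (1+t) ^ (μ2-μ1)) (Ioo 0 1) :=
      contOn_rpow (continuous_const.add continuous_id) _ (fun t ht => by
        show (1:ℝ) + t ≠ 0; intro hh; have h1 := ht.1; linarith [hh])
    have := (((continuous_pow n).continuousOn.mul cA).mul cB).mul cC
    apply this.congr
    intro t _
    unfold dw
    simp only [Pi.mul_apply]
    ring

lemma integrableOn_left (h1 : -(1/2) < μ1) (h2 : μ1 < μ2) (n : ℕ) :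
    IntegrableOn (fun s => (-s)^n * dw μ1 μ2 (-s)) (Ioo 0 1) volume := by
  have hμ : (0:ℝ) < 2*μ1 + 1 := by linarith
  have hc : (0:ℝ) < μ2 - μ1 := by linarith
  have h2c : (1:ℝ) ≤ 2 ^ (μ2-μ1) := by
    rw [show (1:ℝ) = 2 ^ (0:ℝ) by simp]
    exact Real.rpow_le_rpow_of_exponent_le (by norm_num) hc.le
  apply integrableOn_Ioo_of_bound (C := 2 ^ (μ2-μ1)) ?_ hμ one_pos
  · intro s hs
    obtain ⟨hs0, hs1⟩ := hs
    have h1s : (0:ℝ) < 1 - s := by linarith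
    have h2s : (0:ℝ) < 1 + s := by linarith
    have hw : dw μ1 μ2 (-s) = s ^ (2*μ1) * (1+s) ^ (μ2-μ1-1) * (1-s) ^ (μ2-μ1) := by
      unfold dw
      rw [abs_neg, abs_of_pos hs0, show (1:ℝ) - -s = 1+s by ring, show (1:ℝ) + -s = 1-s by ring]
    have hb1 : (1+s) ^ (μ2-μ1-1) ≤ 2 ^ (μ2-μ1) := by
      rcases le_or_gt 1 (μ2-μ1) with hcase | hcase
      · calc (1+s) ^ (μ2-μ1-1) ≤ 2 ^ (μ2-μ1-1) :=
              Real.rpow_le_rpow (by linarith) (by linarith) (by linarith)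
          _ ≤ 2 ^ (μ2-μ1) := Real.rpow_le_rpow_of_exponent_le (by norm_num) (by linarith)
      · calc (1+s) ^ (μ2-μ1-1) ≤ 1 :=
              Real.rpow_le_one_of_one_le_of_nonpos (by linarith) (by linarith)
          _ ≤ 2 ^ (μ2-μ1) := h2c
    have hb2 : (1-s) ^ (μ2-μ1) ≤ 1 := Real.rpow_le_one (by linarith) (by linarith) hc.le
    have hb3 : |(-s) ^ n| ≤ 1 := by
      rw [abs_pow, abs_neg, abs_of_pos hs0]
      exact pow_le_one₀ hs0.le hs1.le
    have ee : (2*μ1+1-1) = 2*μ1 := by ring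
    rw [Real.norm_eq_abs, abs_mul, hw,
      abs_of_nonneg (show (0:ℝ) ≤ s ^ (2*μ1) * (1+s) ^ (μ2-μ1-1) * (1-s) ^ (μ2-μ1) by positivity)]
    have expand : s ^ (2*μ1) * (1+s) ^ (μ2-μ1-1) * (1-s) ^ (μ2-μ1)
        ≤ s ^ (2*μ1) * (2 ^ (μ2-μ1)) * 1 := by
      apply mul_le_mul (mul_le_mul_of_nonneg_left hb1 (by positivity)) hb2 (by positivity)
        (by positivity)
    calc |(-s) ^ n| * (s ^ (2*μ1) * (1+s) ^ (μ2-μ1-1) * (1-s) ^ (μ2-μ1))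
        ≤ 1 * (s ^ (2*μ1) * (2 ^ (μ2-μ1)) * 1) :=
          mul_le_mul hb3 expand (by positivity) (by norm_num)
      _ = 2 ^ (μ2-μ1) * (s ^ (2*μ1+1-1) * (1-s) ^ ((1:ℝ)-1)) := by
          rw [ee, show ((1:ℝ)-1) = 0 by ring, Real.rpow_zero]
          ring
  · have cA : ContinuousOn (fun s : ℝ => |(-s)| ^ (2*μ1)) (Ioo 0 1) :=
      contOn_rpow (continuous_abs.comp continuous_neg) _ (fun s hs => by
        simp only [Function.comp, abs_ne_zero, neg_ne_zero]; exact hs.1.ne')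
    have cB : ContinuousOn (fun s : ℝ => (1-(-s)) ^ (μ2-μ1-1)) (Ioo 0 1) :=
      contOn_rpow (continuous_const.sub continuous_neg) _ (fun s hs => by
        have := hs.1; show (1:ℝ) - -s ≠ 0; intro hh; nlinarith [hh])
    have cC : ContinuousOn (fun s : ℝ => (1+(-s)) ^ (μ2-μ1)) (Ioo 0 1) :=
      contOn_rpow (continuous_const.add continuous_neg) _ (fun s hs => by
        have := hs.2; show (1:ℝ) + -s ≠ 0; intro hh; nlinarith [hh])
    have := (((continuous_pow n).comp continuous_neg).continuousOn.mul cA).mul cB |>.mul cC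
    apply this.congr
    intro s _
    unfold dw
    simp only [Function.comp, Pi.mul_apply]
    ring

lemma II_right (h1 : -(1/2) < μ1) (h2 : μ1 < μ2) (n : ℕ) :
    IntervalIntegrable (fun t => t^n * dw μ1 μ2 t) volume 0 1 := by
  rw [intervalIntegrable_iff_integrableOn_Ioc_of_le (by norm_num),
    integrableOn_Ioc_iff_integrableOn_Ioo]
  exact integrableOn_right h1 h2 n

lemma II_reflected (h1 : -(1/2) < μ1) (h2 : μ1 < μ2) (n : ℕ) :
    IntervalIntegrable (fun s => (-s)^n * dw μ1 μ2 (-s)) volume 0 1 := by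
  rw [intervalIntegrable_iff_integrableOn_Ioc_of_le (by norm_num),
    integrableOn_Ioc_iff_integrableOn_Ioo]
  exact integrableOn_left h1 h2 n

lemma II_left (h1 : -(1/2) < μ1) (h2 : μ1 < μ2) (n : ℕ) :
    IntervalIntegrable (fun t => t^n * dw μ1 μ2 t) volume (-1) 0 := by
  rw [IntervalIntegrable.iff_comp_neg]
  norm_num
  exact (II_reflected h1 h2 n).symm

lemma dunkl_II (h1 : -(1/2) < μ1) (h2 : μ1 < μ2) (n : ℕ) :
    IntervalIntegrable (fun t => t^n * dw μ1 μ2 t) volume (-1) 1 :=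
  (II_left h1 h2 n).trans (II_right h1 h2 n)

lemma dunkl_moment (h1 : -(1/2) < μ1) (h2 : μ1 < μ2) (n : ℕ) :
    ∫ t in (-1:ℝ)..1, t^n * dw μ1 μ2 t
      = realBeta (μ1 + 1/2 + (n/2 + n%2 : ℕ)) (μ2-μ1) := by
  have hc : (0:ℝ) < μ2-μ1 := by linarith
  have hμ : (-1:ℝ) < 2*μ1 := by linarith
  set k : ℕ := n/2 + n%2 with hk
  set e : ℝ := 2*(k:ℝ) + 2*μ1 with he
  have he1 : (-1:ℝ) < e := by
    have : (0:ℝ) ≤ (k:ℝ) := Nat.cast_nonneg k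
    rw [he]; linarith
  have hrefl : ∫ s in (0:ℝ)..1, (-s)^n * dw μ1 μ2 (-s) = ∫ t in (-1:ℝ)..0, t^n * dw μ1 μ2 t := by
    have := intervalIntegral.integral_comp_neg (a := (0:ℝ)) (b := 1)
      (fun t => t^n * dw μ1 μ2 t)
    simpa using this
  have step1 : ∫ t in (-1:ℝ)..1, t^n * dw μ1 μ2 t
      = ∫ t in (0:ℝ)..1, ((-t)^n * dw μ1 μ2 (-t) + t^n * dw μ1 μ2 t) := by
    rw [← intervalIntegral.integral_add_adjacent_intervals (II_left h1 h2 n) (II_right h1 h2 n),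
      ← hrefl, ← intervalIntegral.integral_add (II_reflected h1 h2 n) (II_right h1 h2 n)]
  have step2 : ∫ t in (0:ℝ)..1, ((-t)^n * dw μ1 μ2 (-t) + t^n * dw μ1 μ2 t)
      = ∫ t in Ioo (0:ℝ) 1, 2 * (t ^ e * (1-t^2) ^ (μ2-μ1-1)) := by
    rw [intervalIntegral.integral_of_le (by norm_num), integral_Ioc_eq_integral_Ioo]
    apply setIntegral_congr_fun measurableSet_Ioo
    intro t ht
    obtain ⟨ht0, ht1⟩ := ht
    have h1t : (0:ℝ) < 1 - t := by linarith
    have h2t : (0:ℝ) < 1 + t := by linarith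
    have hdw : dw μ1 μ2 t = t^(2*μ1) * (1-t)^(μ2-μ1-1) * (1+t)^(μ2-μ1) := by
      unfold dw; rw [abs_of_pos ht0]
    have hdwn : dw μ1 μ2 (-t) = t^(2*μ1) * (1+t)^(μ2-μ1-1) * (1-t)^(μ2-μ1) := by
      unfold dw
      rw [abs_neg, abs_of_pos ht0, show (1:ℝ) - -t = 1+t by ring, show (1:ℝ) + -t = 1-t by ring]
    have ha1 : (1-t)^(μ2-μ1-1) * (1-t) = (1-t)^(μ2-μ1) := by
      rw [← Real.rpow_add_one h1t.ne' (μ2-μ1-1)]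
      norm_num
    have ha2 : (1+t)^(μ2-μ1-1) * (1+t) = (1+t)^(μ2-μ1) := by
      rw [← Real.rpow_add_one h2t.ne' (μ2-μ1-1)]
      norm_num
    have hm : (1-t)^(μ2-μ1-1) * (1+t)^(μ2-μ1-1) = (1-t^2)^(μ2-μ1-1) := by
      rw [show (1:ℝ)-t^2 = (1-t)*(1+t) by ring, Real.mul_rpow h1t.le h2t.le]
    simp only []
    rw [hdw, hdwn]
    rcases Nat.even_or_odd n with ⟨p, hp⟩ | ⟨p, hp⟩
    · have hkp : k = p := by rw [hk]; omega
      have hneg : (-t)^n = t^n := Even.neg_pow ⟨p, hp⟩ t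
      have hcomb : t^n * t^(2*μ1) = t ^ e := by
        rw [← Real.rpow_natCast t n, ← Real.rpow_add ht0]
        congr 1
        rw [he, hkp, hp]
        push_cast
        ring
      rw [hneg]
      calc t^n * (t^(2*μ1) * (1+t)^(μ2-μ1-1) * (1-t)^(μ2-μ1))
            + t^n * (t^(2*μ1) * (1-t)^(μ2-μ1-1) * (1+t)^(μ2-μ1))
          = (t^n * t^(2*μ1)) * (((1-t)^(μ2-μ1-1) * (1+t)^(μ2-μ1-1)) * ((1-t)+(1+t))) := by
            rw [← ha1, ← ha2]; ring
        _ = 2 * (t ^ e * (1-t^2)^(μ2-μ1-1)) := by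
            rw [hm, hcomb]; ring
    · have hkp : k = p + 1 := by rw [hk]; omega
      have hneg : (-t)^n = -(t^n) := Odd.neg_pow ⟨p, hp⟩ t
      have hcomb : t^n * t^(2*μ1) * t = t ^ e := by
        rw [← Real.rpow_natCast t n, ← Real.rpow_add ht0]
        nth_rewrite 2 [← Real.rpow_one t]
        rw [← Real.rpow_add ht0]
        congr 1
        rw [he, hkp, hp]
        push_cast
        ring
      rw [hneg]
      calc -(t^n) * (t^(2*μ1) * (1+t)^(μ2-μ1-1) * (1-t)^(μ2-μ1))
            + t^n * (t^(2*μ1) * (1-t)^(μ2-μ1-1) * (1+t)^(μ2-μ1))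
          = (t^n * t^(2*μ1)) * (((1-t)^(μ2-μ1-1) * (1+t)^(μ2-μ1-1)) * ((1+t)-(1-t))) := by
            rw [← ha1, ← ha2]; ring
        _ = 2 * (t ^ e * (1-t^2)^(μ2-μ1-1)) := by
            rw [hm, ← hcomb]; ring
  rw [step1, step2, MeasureTheory.integral_const_mul, half_moment he1 hc]
  rw [show (e+1)/2 = μ1 + 1/2 + (k:ℝ) by rw [he]; ring]
  ring

lemma dunkl_swap (h1 : -(1/2) < μ1) (h2 : μ1 < μ2) (x : ℝ) :
    ∫ t in (-1:ℝ)..1, dunklExp μ1 (x*t) * dw μ1 μ2 t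
      = ∑' n : ℕ, (x^n / dunklGamma μ1 n) * ∫ t in (-1:ℝ)..1, t^n * dw μ1 μ2 t := by
  have hγ1 := dunklGamma_pos h1
  have hF_int : ∀ n : ℕ, Integrable (fun t => (x^n / dunklGamma μ1 n) * (t^n * dw μ1 μ2 t))
      (volume.restrict (Ioc (-1:ℝ) 1)) := by
    intro n
    have := (dunkl_II h1 h2 n).const_mul (x^n / dunklGamma μ1 n)
    rw [intervalIntegrable_iff_integrableOn_Ioc_of_le (by norm_num)] at this
    exact this
  have hdwInt : IntegrableOn (dw μ1 μ2) (Ioc (-1:ℝ) 1) volume := by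
    have := hF_int 0
    have h0 : (fun t : ℝ => (x^0 / dunklGamma μ1 0) * (t^0 * dw μ1 μ2 t))
        = fun t => (1 / dunklGamma μ1 0) * dw μ1 μ2 t := by
      funext t; simp
    rw [h0] at this
    have := this.const_mul (dunklGamma μ1 0)
    apply this.congr
    apply ae_of_all
    intro t
    simp only []
    rw [← mul_assoc, mul_one_div, div_self (hγ1 0).ne', one_mul]
  set W : ℝ := ∫ t in Ioc (-1:ℝ) 1, dw μ1 μ2 t with hW
  have hF_sum : Summable fun n : ℕ =>
      ∫ t in Ioc (-1:ℝ) 1, ‖(x^n / dunklGamma μ1 n) * (t^n * dw μ1 μ2 t)‖ := by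
    apply Summable.of_nonneg_of_le (fun n => integral_nonneg (fun t => norm_nonneg _))
      (fun n => ?_) ((summable_dunkl h1 x).mul_right W)
    have habs : |x^n / dunklGamma μ1 n| = |x|^n / dunklGamma μ1 n := by
      rw [abs_div, abs_pow, abs_of_pos (hγ1 n)]
    calc ∫ t in Ioc (-1:ℝ) 1, ‖(x^n / dunklGamma μ1 n) * (t^n * dw μ1 μ2 t)‖
        = (|x|^n / dunklGamma μ1 n) * ∫ t in Ioc (-1:ℝ) 1, |t^n * dw μ1 μ2 t| := by
          rw [← habs, ← MeasureTheory.integral_const_mul]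
          congr 1
          funext t
          rw [Real.norm_eq_abs, abs_mul]
      _ ≤ (|x|^n / dunklGamma μ1 n) * W := by
          apply mul_le_mul_of_nonneg_left _ (div_nonneg (pow_nonneg (abs_nonneg x) n) (hγ1 n).le)
          rw [hW]
          apply setIntegral_mono_on _ hdwInt measurableSet_Ioc
          · intro t ht
            rw [abs_mul, abs_of_nonneg (dw_nonneg μ1 μ2 ht), abs_pow]
            apply mul_le_of_le_one_left (dw_nonneg μ1 μ2 ht)
            apply pow_le_one₀ (abs_nonneg t)
            rw [abs_le]
            exact ⟨by linarith [ht.1], ht.2⟩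
          · have hII := dunkl_II h1 h2 n
            rw [intervalIntegrable_iff_integrableOn_Ioc_of_le (by norm_num)] at hII
            exact hII.abs
  have hswap := MeasureTheory.integral_tsum_of_summable_integral_norm
    (μ := volume.restrict (Ioc (-1:ℝ) 1)) hF_int hF_sum
  rw [intervalIntegral.integral_of_le (by norm_num : (-1:ℝ) ≤ 1)]
  have hfun : (fun t => dunklExp μ1 (x*t) * dw μ1 μ2 t)
      = fun t => ∑' n : ℕ, (x^n / dunklGamma μ1 n) * (t^n * dw μ1 μ2 t) := by
    funext t
    unfold dunklExp
    rw [← tsum_mul_right]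
    apply tsum_congr
    intro n
    rw [mul_pow]
    ring
  rw [hfun, ← hswap]
  apply tsum_congr
  intro n
  rw [MeasureTheory.integral_const_mul, intervalIntegral.integral_of_le (by norm_num : (-1:ℝ) ≤ 1)]


/-- integral representation of the generalized exponential:
for `-1/2 < μ₁ < μ₂` and every real `x`,
`exp_{μ₂}(x) = (1/β(μ₁+1/2, μ₂-μ₁)) ∫_{-1}^{1} exp_{μ₁}(xt) |t|^{2μ₁}
  (1-t)^{μ₂-μ₁-1} (1+t)^{μ₂-μ₁} dt`. -/
theorem dunklExp_integral_rep
    (μ1 μ2 : ℝ) (h1 : -(1/2) < μ1) (h2 : μ1 < μ2) (x : ℝ) :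
    dunklExp μ2 x =
      (realBeta (μ1 + 1/2) (μ2 - μ1))⁻¹ *
        ∫ t in (-1:ℝ)..1,
          dunklExp μ1 (x * t) * |t| ^ (2 * μ1) * (1 - t) ^ (μ2 - μ1 - 1) *
            (1 + t) ^ (μ2 - μ1) := by
  have ha : (0:ℝ) < μ1 + 1/2 := by linarith
  have hc : (0:ℝ) < μ2 - μ1 := by linarith
  have hβ : 0 < realBeta (μ1 + 1/2) (μ2 - μ1) := realBeta_pos ha hc
  have hrw : (fun t => dunklExp μ1 (x * t) * |t| ^ (2 * μ1) * (1 - t) ^ (μ2 - μ1 - 1) *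
      (1 + t) ^ (μ2 - μ1)) = fun t => dunklExp μ1 (x*t) * dw μ1 μ2 t := by
    funext t
    unfold dw
    ring
  rw [hrw, dunkl_swap h1 h2 x]
  have hterm : ∀ n : ℕ, (x^n / dunklGamma μ1 n) * (∫ t in (-1:ℝ)..1, t^n * dw μ1 μ2 t)
      = realBeta (μ1 + 1/2) (μ2 - μ1) * (x^n / dunklGamma μ2 n) := by
    intro n
    rw [dunkl_moment h1 h2 n]
    have hshift := realBeta_shift ha hc (n/2 + n%2)
    have hprodeq : ∏ i ∈ Finset.range (n/2 + n%2), (μ1 + 1/2 + (μ2 - μ1) + (i:ℝ))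
        = ∏ i ∈ Finset.range (n/2 + n%2), (μ2 + 1/2 + (i:ℝ)) :=
      Finset.prod_congr rfl (fun i _ => by ring)
    rw [hprodeq] at hshift
    have hP1 : (0:ℝ) < ∏ i ∈ Finset.range (n/2 + n%2), (μ1 + 1/2 + (i:ℝ)) :=
      Finset.prod_pos (fun i _ => by have : (0:ℝ) ≤ i := Nat.cast_nonneg i; linarith)
    have hP2 : (0:ℝ) < ∏ i ∈ Finset.range (n/2 + n%2), (μ2 + 1/2 + (i:ℝ)) :=
      Finset.prod_pos (fun i _ => by have : (0:ℝ) ≤ i := Nat.cast_nonneg i; linarith)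
    have hβk : realBeta (μ1 + 1/2 + (n/2 + n%2 : ℕ)) (μ2 - μ1)
        = realBeta (μ1 + 1/2) (μ2 - μ1)
          * (∏ i ∈ Finset.range (n/2 + n%2), (μ1 + 1/2 + (i:ℝ)))
          / (∏ i ∈ Finset.range (n/2 + n%2), (μ2 + 1/2 + (i:ℝ))) := by
      rw [eq_div_iff hP2.ne']
      exact hshift
    rw [hβk]
    unfold dunklGamma
    have hfac : (0:ℝ) < (Nat.factorial (n/2) : ℝ) := by positivity
    set P1 := ∏ i ∈ Finset.range (n/2 + n%2), (μ1 + 1/2 + (i:ℝ)) with hP1def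
    set P2 := ∏ i ∈ Finset.range (n/2 + n%2), (μ2 + 1/2 + (i:ℝ)) with hP2def
    have h2n : ((2:ℝ)^n) ≠ 0 := by positivity
    field_simp [hP1.ne', hP2.ne', hfac.ne']
  calc dunklExp μ2 x
      = (realBeta (μ1 + 1/2) (μ2 - μ1))⁻¹ * (realBeta (μ1 + 1/2) (μ2 - μ1) * dunklExp μ2 x) := by
        rw [← mul_assoc, inv_mul_cancel₀ hβ.ne', one_mul]
    _ = (realBeta (μ1 + 1/2) (μ2 - μ1))⁻¹
        * ∑' n : ℕ, (x^n / dunklGamma μ1 n) * ∫ t in (-1:ℝ)..1, t^n * dw μ1 μ2 t := by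
        congr 1
        unfold dunklExp
        rw [← tsum_mul_left]
        exact (tsum_congr hterm).symm

end main
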